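/- Let G be a connected balanced bipartite graph with colour classes V and E, |V| = |E| = n, and E = {e₁,…,e_n}. The coefficient of x^{n−1} in the interior polynomial I_G(x) is nonzero if and only if for every i, the function f_i with f_i(e_i) = 0 and f_i(e_j) = 1 for all j ≠ i is a hypertree of G. Moreover, this coefficient is at most 1. -/

import Mathlib

open SimpleGraph

variable {V E : Type*}

/-- The bipartite graph on `V ⊕ E` determined by the incidence relation `r`. -/
def BipGraph (r : V → E → Prop) : SimpleGraph (V ⊕ E) where
  Adj x y := (∃ v e, x = Sum.inl v ∧ y = Sum.inr e ∧ r v e) ∨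
             (∃ v e, x = Sum.inr e ∧ y = Sum.inl v ∧ r v e)
  symm := by
    constructor
    rintro x y (⟨v, e, rfl, rfl, h⟩ | ⟨v, e, rfl, rfl, h⟩)
    · exact Or.inr ⟨v, e, rfl, rfl, h⟩
    · exact Or.inl ⟨v, e, rfl, rfl, h⟩
  loopless := by
    constructor
    rintro x (⟨v, e, rfl, h, _⟩ | ⟨v, e, rfl, h, _⟩) <;> simp_all

/-- `τ` is a spanning tree of `G`. -/
def IsSpanningTree {α : Type*} (G τ : SimpleGraph α) : Prop :=
  τ ≤ G ∧ τ.Connected ∧ τ.IsAcyclic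

/-- A hypertree of the hypergraph induced by the bipartite graph `BipGraph r`
(with `E` the set of hyperedges): a function realized by a spanning tree. -/
def IsHypertree (r : V → E → Prop) (f : E → ℕ) : Prop :=
  ∃ τ : SimpleGraph (V ⊕ E), IsSpanningTree (BipGraph r) τ ∧
    ∀ e : E, (τ.neighborSet (Sum.inr e)).ncard = f e + 1

/-- The restriction of a graph `H` on `V ⊕ E` (typically a subgraph of `BipGraph r`)
to the hyperedge set `A` together with all `V`-vertices incident (in `G`) to `A`. -/
def BipRestrict (r : V → E → Prop) (H : SimpleGraph (V ⊕ E)) (A : Set E) :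
    SimpleGraph ({v : V // ∃ e ∈ A, r v e} ⊕ A) where
  Adj x y := H.Adj (Sum.elim (fun v => Sum.inl v.1) (fun e => Sum.inr e.1) x)
               (Sum.elim (fun v => Sum.inl v.1) (fun e => Sum.inr e.1) y)
  symm := ⟨fun _ _ h => H.adj_symm h⟩
  loopless := by
    constructor
    rintro (v | e) h <;> exact H.irrefl h

/-- `μ(A) = |⋃A| - c(A)`. -/
noncomputable def mu (r : V → E → Prop) (A : Set E) : ℕ :=
  Nat.card {v : V // ∃ e ∈ A, r v e} -
    Nat.card (BipRestrict r (BipGraph r) A).ConnectedComponent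

/-- `A` is tight at `f`. -/
noncomputable def Tight (r : V → E → Prop) (f : E → ℕ) (A : Finset E) : Prop :=
  ∑ e ∈ A, f e = mu r (↑A : Set E)

open Classical in
/-- The function obtained from `f` by decreasing `f e` by one and increasing `f e'` by one. -/
noncomputable def Transfer (f : E → ℕ) (e e' : E) : E → ℕ :=
  fun x => if x = e then f e - 1 else if x = e' then f e' + 1 else f x

/-- The internal inactivity of `f`: the number of internally inactive hyperedges. -/
noncomputable def intInact (r : V → E → Prop) [LT E] (f : E → ℕ) : ℕ :=
  Nat.card {e : E // ∃ e', e' < e ∧ IsHypertree r (Transfer f e e')}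

/-- The external inactivity of `f`: the number of externally inactive hyperedges. -/
noncomputable def extInact (r : V → E → Prop) [LT E] (f : E → ℕ) : ℕ :=
  Nat.card {e : E // ∃ e', e' < e ∧ IsHypertree r (Transfer f e' e)}

/-- The interior polynomial `I_G(x) = ∑_f x^{ῑ(f)}`. -/
noncomputable def interiorPoly (r : V → E → Prop) [Fintype E] [LT E] : Polynomial ℤ :=
  ∑ i ∈ Finset.range (Fintype.card E + 1),
    Polynomial.C ((Nat.card {f : E → ℕ // IsHypertree r f ∧ intInact r f = i} : ℕ) : ℤ) *
      Polynomial.X ^ i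

/-- The exterior polynomial `X_G(y) = ∑_f y^{ε̄(f)}`. -/
noncomputable def exteriorPoly (r : V → E → Prop) [Fintype E] [LT E] : Polynomial ℤ :=
  ∑ i ∈ Finset.range (Fintype.card E + 1),
    Polynomial.C ((Nat.card {f : E → ℕ // IsHypertree r f ∧ extInact r f = i} : ℕ) : ℤ) *
      Polynomial.X ^ i


section AuxGraph

open SimpleGraph Sum

variable {α : Type*}

/-- From a walk in `G.deleteEdges s`, get a `G`-walk avoiding `s`. -/
private lemma walk_avoid {G : SimpleGraph α} {s : Set (Sym2 α)} {u w : α}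
    (W : (G.deleteEdges s).Walk u w) : ∃ W' : G.Walk u w, ∀ e ∈ W'.edges, e ∉ s := by
  induction W with
  | nil => exact ⟨SimpleGraph.Walk.nil, by simp⟩
  | @cons a b c h W ih =>
    obtain ⟨W', hW'⟩ := ih
    rw [SimpleGraph.deleteEdges_adj] at h
    refine ⟨SimpleGraph.Walk.cons h.1 W', ?_⟩
    intro e he
    rw [SimpleGraph.Walk.edges_cons, List.mem_cons] at he
    rcases he with rfl | he
    · exact h.2
    · exact hW' e he

private lemma path_edges_subset_walk_edges {G : SimpleGraph α} (hA : G.IsAcyclic) {u w : α}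
    {P : G.Walk u w} (hP : P.IsPath) (W : G.Walk u w) : ∀ e ∈ P.edges, e ∈ W.edges := by
  classical
  have h := hA.path_unique ⟨P, hP⟩ W.toPath
  intro e he
  apply SimpleGraph.Walk.edges_toPath_subset W
  have : P.edges = (W.toPath : G.Walk u w).edges := by rw [← h]
  rwa [← this]

private lemma not_reach_del_of_mem_path {G : SimpleGraph α} (hA : G.IsAcyclic) {d₁ d₂ : α}
    {P : G.Walk d₁ d₂} (hP : P.IsPath) {ε : Sym2 α} (hε : ε ∈ P.edges) :
    ¬ (G.deleteEdges {ε}).Reachable d₁ d₂ := by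
  rintro ⟨W⟩
  obtain ⟨W', hW'⟩ := walk_avoid W
  exact hW' ε (path_edges_subset_walk_edges hA hP W' ε hε) rfl

/-- Every vertex can, after deleting one edge, still reach one of its endpoints. -/
private lemma reach_del_endpoint {G : SimpleGraph α} {p q u w : α} (W : G.Walk u w) :
    (G.deleteEdges {s(p,q)}).Reachable u w ∨
      (G.deleteEdges {s(p,q)}).Reachable u p ∨ (G.deleteEdges {s(p,q)}).Reachable u q := by
  induction W with
  | nil => exact Or.inl (SimpleGraph.Reachable.refl _)
  | @cons a b c h W ih =>
    by_cases he : s(a, b) = s(p, q)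
    · rw [Sym2.eq_iff] at he
      rcases he with ⟨rfl, rfl⟩ | ⟨rfl, rfl⟩
      · exact Or.inr (Or.inl (SimpleGraph.Reachable.refl _))
      · exact Or.inr (Or.inr (SimpleGraph.Reachable.refl _))
    · have hadj : (G.deleteEdges {s(p,q)}).Adj a b := by
        rw [SimpleGraph.deleteEdges_adj]
        exact ⟨h, he⟩
      rcases ih with hr | hr | hr
      · exact Or.inl (hadj.reachable.trans hr)
      · exact Or.inr (Or.inl (hadj.reachable.trans hr))
      · exact Or.inr (Or.inr (hadj.reachable.trans hr))

private lemma exists_flip {G : SimpleGraph α} (S : α → Prop) :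
    ∀ {u w : α} (W : G.Walk u w), ¬ S u → S w → ∃ a b : α, s(a, b) ∈ W.edges ∧ ¬ S a ∧ S b := by
  intro u w W
  induction W with
  | nil => intro hu hw; exact absurd hw hu
  | @cons a b c h W ih =>
    intro hu hw
    by_cases hb : S b
    · exact ⟨a, b, by simp, hu, hb⟩
    · obtain ⟨p, q, hm, h1, h2⟩ := ih hb hw
      exact ⟨p, q, by simp [hm], h1, h2⟩

/-- The fundamental tree surgery: delete edge `s(x,v)` from the spanning tree `τ`, and add a
`G`-edge `s(d₁,d₂)` whose unique `τ`-path contains `s(x,v)`; the result is a spanning tree. -/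
private lemma tree_swap {G τ : SimpleGraph α} (hle : τ ≤ G) (hc : τ.Connected)
    (hA : τ.IsAcyclic) {x v d₁ d₂ : α} (hε : τ.Adj x v) (hδG : G.Adj d₁ d₂)
    (hδτ : ¬ τ.Adj d₁ d₂) {P : τ.Walk d₁ d₂} (hP : P.IsPath) (hεP : s(x, v) ∈ P.edges) :
    IsSpanningTree G ((τ.deleteEdges {s(x, v)}) ⊔ SimpleGraph.edge d₁ d₂) ∧
      ((τ.deleteEdges {s(x, v)}) ⊔ SimpleGraph.edge d₁ d₂).edgeSet =
        (τ.edgeSet \ {s(x, v)}) ∪ {s(d₁, d₂)} := by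
  set H := τ.deleteEdges {s(x, v)} with hH
  set τ' := H ⊔ SimpleGraph.edge d₁ d₂ with hτ'
  have hd12 : d₁ ≠ d₂ := hδG.ne
  have hsep : ¬ H.Reachable d₁ d₂ := not_reach_del_of_mem_path hA hP hεP
  have hedge : τ'.Adj d₁ d₂ := Or.inr (by rw [SimpleGraph.edge_adj]; exact ⟨Or.inl ⟨rfl, rfl⟩, hd12⟩)
  have hHle : H ≤ τ' := le_sup_left
  have hra : ∀ u : α, H.Reachable u x ∨ H.Reachable u v := by
    intro u
    obtain ⟨W⟩ := hc.preconnected u x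
    rcases reach_del_endpoint (p := x) (q := v) W with hr | hr | hr
    · exact Or.inl hr
    · exact Or.inl hr
    · exact Or.inr hr
  have hcross : τ'.Reachable x v := by
    rcases hra d₁ with h1 | h1 <;> rcases hra d₂ with h2 | h2
    · exact absurd (h1.trans h2.symm) hsep
    · exact ((h1.symm.mono hHle).trans hedge.reachable).trans (h2.mono hHle)
    · exact ((h2.symm.mono hHle).trans hedge.symm.reachable).trans (h1.mono hHle)
    · exact absurd (h1.trans h2.symm) hsep
  have hreachx : ∀ u : α, τ'.Reachable u x := by
    intro u
    rcases hra u with h | h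
    · exact h.mono hHle
    · exact (h.mono hHle).trans hcross.symm
  have hconn : τ'.Connected := by
    haveI := hc.nonempty
    exact SimpleGraph.Connected.mk (fun u w => (hreachx u).trans (hreachx w).symm)
  have hES : τ'.edgeSet = (τ.edgeSet \ {s(x, v)}) ∪ {s(d₁, d₂)} := by
    rw [hτ', SimpleGraph.edgeSet_sup, hH, SimpleGraph.edgeSet_deleteEdges,
      SimpleGraph.edge_edgeSet_of_ne hd12]
  have hle' : τ' ≤ G := by
    rw [hτ']
    refine sup_le (le_trans (SimpleGraph.deleteEdges_le _) hle) ?_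
    intro a b hab
    rw [SimpleGraph.edge_adj] at hab
    rcases hab.1 with ⟨rfl, rfl⟩ | ⟨rfl, rfl⟩
    · exact hδG
    · exact hδG.symm
  have hsub : τ' \ SimpleGraph.fromEdgeSet {s(d₁, d₂)} ≤ H := by
    intro a b hab
    rcases hab.1 with h | h
    · exact h
    · exfalso
      rw [SimpleGraph.edge_adj] at h
      apply hab.2
      rw [SimpleGraph.fromEdgeSet_adj]
      rcases h.1 with ⟨rfl, rfl⟩ | ⟨rfl, rfl⟩
      · exact ⟨rfl, h.2⟩
      · exact ⟨Sym2.eq_swap, h.2⟩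
  have hacyc : τ'.IsAcyclic := by
    intro u c hC
    by_cases hmem : s(d₁, d₂) ∈ c.edges
    · have := (SimpleGraph.adj_and_reachable_delete_edges_iff_exists_cycle
        (G := τ') (v := d₁) (w := d₂)).mpr ⟨u, c, hC, hmem⟩
      exact hsep (this.2.mono hsub)
    · have hsubE : ∀ e ∈ c.edges, e ∈ τ.edgeSet := by
        intro e he
        have : e ∈ τ'.edgeSet := c.edges_subset_edgeSet he
        rw [hES] at this
        rcases this with h | h
        · exact h.1
        · rw [Set.mem_singleton_iff] at h
          subst h
          exact absurd he hmem
      exact hA (c.transfer τ hsubE) (hC.transfer hsubE)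
  exact ⟨⟨hle', hconn, hacyc⟩, hES⟩

end AuxGraph

section AuxDeg

open SimpleGraph Sum

variable {α : Type*}

private lemma nbhd_del_of_ne {G : SimpleGraph α} {x v u : α} (h1 : u ≠ x) (h2 : u ≠ v) :
    (G.deleteEdges {s(x, v)}).neighborSet u = G.neighborSet u := by
  ext a
  simp only [SimpleGraph.mem_neighborSet, SimpleGraph.deleteEdges_adj, Set.mem_singleton_iff,
    and_iff_left_iff_imp]
  intro _ hcon
  rw [Sym2.eq_iff] at hcon
  rcases hcon with ⟨rfl, rfl⟩ | ⟨rfl, rfl⟩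
  · exact h1 rfl
  · exact h2 rfl

private lemma nbhd_del_left {G : SimpleGraph α} {x v : α} (hxv : x ≠ v) :
    (G.deleteEdges {s(x, v)}).neighborSet x = G.neighborSet x \ {v} := by
  ext a
  simp only [SimpleGraph.mem_neighborSet, SimpleGraph.deleteEdges_adj, Set.mem_singleton_iff,
    Set.mem_diff]
  constructor
  · rintro ⟨h, hne⟩
    refine ⟨h, ?_⟩
    rintro rfl
    exact hne rfl
  · rintro ⟨h, hne⟩
    refine ⟨h, fun hcon => ?_⟩
    rw [Sym2.eq_iff] at hcon
    rcases hcon with ⟨-, rfl⟩ | ⟨rfl, rfl⟩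
    · exact hne rfl
    · exact hxv rfl

private lemma nbhd_sup_edge_of_ne {G : SimpleGraph α} {d₁ d₂ u : α} (h1 : u ≠ d₁) (h2 : u ≠ d₂) :
    (G ⊔ SimpleGraph.edge d₁ d₂).neighborSet u = G.neighborSet u := by
  ext a
  simp only [SimpleGraph.mem_neighborSet, SimpleGraph.sup_adj, SimpleGraph.edge_adj,
    or_iff_left_iff_imp]
  rintro ⟨⟨rfl, rfl⟩ | ⟨rfl, rfl⟩, -⟩
  · exact absurd rfl h1
  · exact absurd rfl h2

private lemma nbhd_sup_edge_right {G : SimpleGraph α} {d₁ d₂ : α} (hn : d₁ ≠ d₂) :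
    (G ⊔ SimpleGraph.edge d₁ d₂).neighborSet d₂ = insert d₁ (G.neighborSet d₂) := by
  ext a
  simp only [SimpleGraph.mem_neighborSet, Set.mem_insert_iff, SimpleGraph.sup_adj]
  rw [SimpleGraph.edge_adj]
  constructor
  · rintro (h | ⟨⟨h1, h2⟩ | ⟨h1, h2⟩, hne⟩)
    · exact Or.inr h
    · exact absurd h1 (Ne.symm hn)
    · exact Or.inl h2
  · rintro (rfl | h)
    · exact Or.inr ⟨Or.inr ⟨rfl, rfl⟩, fun hc => hn hc.symm⟩
    · exact Or.inl h

end AuxDeg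

section AuxBip

open SimpleGraph Sum

variable {V E : Type*} {r : V → E → Prop}

private lemma bip_adj_inr {e : E} {a : V ⊕ E} (h : (BipGraph r).Adj (Sum.inr e) a) :
    ∃ v : V, a = Sum.inl v ∧ r v e := by
  rcases h with ⟨v, e', h1, _, _⟩ | ⟨v, e', h1, h2, h3⟩
  · exact absurd h1 (by simp)
  · rw [Sum.inr.injEq] at h1
    exact ⟨v, h2, h1 ▸ h3⟩

private lemma bip_adj_inl {v : V} {a : V ⊕ E} (h : (BipGraph r).Adj (Sum.inl v) a) :
    ∃ e : E, a = Sum.inr e ∧ r v e := by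
  rcases h with ⟨v', e, h1, h2, h3⟩ | ⟨v', e, h1, _, _⟩
  · rw [Sum.inl.injEq] at h1
    exact ⟨e, h2, h1 ▸ h3⟩
  · exact absurd h1 (by simp)

variable [Fintype V] [Fintype E] [DecidableEq E]

/-- The degree of a hyperedge vertex. -/
private noncomputable def dE (G : SimpleGraph (V ⊕ E)) (e : E) : ℕ := (G.neighborSet (Sum.inr e)).ncard

private lemma exists_diff_edge {τ σ : SimpleGraph (V ⊕ E)} (hτ : τ ≤ BipGraph r) {x : E}
    (h : dE σ x < dE τ x) :
    ∃ v : V, τ.Adj (Sum.inr x) (Sum.inl v) ∧ ¬ σ.Adj (Sum.inr x) (Sum.inl v) := by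
  by_contra hcon
  push_neg at hcon
  have hsub : τ.neighborSet (Sum.inr x) ⊆ σ.neighborSet (Sum.inr x) := by
    intro a ha
    obtain ⟨v, rfl, -⟩ := bip_adj_inr (hτ ha)
    exact hcon v ha
  have h' : (σ.neighborSet (Sum.inr x)).ncard < (τ.neighborSet (Sum.inr x)).ncard := h
  exact absurd (Set.ncard_le_ncard hsub (Set.toFinite _)) (by omega)

/-- The key surgery step for the exchange lemma. -/
private lemma exchange_step {τ : SimpleGraph (V ⊕ E)} (hτ : IsSpanningTree (BipGraph r) τ)
    {x : E} {v : V} {c : V} {z : E}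
    (hεAdj : τ.Adj (Sum.inr x) (Sum.inl v))
    (hδB : (BipGraph r).Adj (Sum.inl c) (Sum.inr z))
    (hητ : ¬ τ.Adj (Sum.inl c) (Sum.inr z))
    (hnr : ¬ (τ.deleteEdges {s(Sum.inr x, Sum.inl v)}).Reachable (Sum.inl c) (Sum.inr z)) :
    ∃ τ' : SimpleGraph (V ⊕ E), IsSpanningTree (BipGraph r) τ' ∧
      τ'.edgeSet = (τ.edgeSet \ {s(Sum.inr x, Sum.inl v)}) ∪ {s(Sum.inl c, Sum.inr z)} ∧
      (∀ y : E, dE τ' y + (if y = x then 1 else 0) = dE τ y + (if y = z then 1 else 0)) := by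
  classical
  have hxv : (Sum.inr x : V ⊕ E) ≠ Sum.inl v := by simp
  -- the τ-path between the endpoints of the new edge contains the deleted edge
  obtain ⟨Q0⟩ := hτ.2.1.preconnected (Sum.inl c) (Sum.inr z)
  set Q : τ.Walk (Sum.inl c) (Sum.inr z) := (Q0.toPath : τ.Walk (Sum.inl c) (Sum.inr z))
    with hQdef
  have hQpath : Q.IsPath := Q0.toPath.property
  have hεQ : s(Sum.inr x, Sum.inl v) ∈ Q.edges := by
    by_contra hno
    apply hnr
    refine ⟨Q.transfer _ ?_⟩
    intro e he
    rw [SimpleGraph.edgeSet_deleteEdges]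
    exact ⟨Q.edges_subset_edgeSet he, fun hc => hno (Set.mem_singleton_iff.mp hc ▸ he)⟩
  -- hε adjacency of deleted edge is not needed by tree_swap
  obtain ⟨hst, hES⟩ := tree_swap hτ.1 hτ.2.1 hτ.2.2
    (x := Sum.inr x) (v := Sum.inl v) (d₁ := Sum.inl c) (d₂ := Sum.inr z)
    hεAdj hδB hητ hQpath hεQ
  set τ' := (τ.deleteEdges {s(Sum.inr x, Sum.inl v)}) ⊔ SimpleGraph.edge (Sum.inl c) (Sum.inr z)
    with hτ'def
  refine ⟨τ', hst, hES, ?_⟩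
  have hvmem : (Sum.inl v : V ⊕ E) ∈ τ.neighborSet (Sum.inr x) := hεAdj
  have hcz : ¬ τ.Adj (Sum.inr z) (Sum.inl c) := fun h => hητ h.symm
  intro y
  by_cases hyz : y = z
  · subst hyz
    by_cases hyx : y = x
    · subst hyx
      have h1 : τ'.neighborSet (Sum.inr y) =
          insert (Sum.inl c) (τ.neighborSet (Sum.inr y) \ {Sum.inl v}) := by
        rw [hτ'def, nbhd_sup_edge_right (by simp), nbhd_del_left hxv]
      have h2 : (Sum.inl c : V ⊕ E) ∉ τ.neighborSet (Sum.inr y) \ {Sum.inl v} :=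
        fun h => hcz h.1
      have hnum : (τ'.neighborSet (Sum.inr y)).ncard = (τ.neighborSet (Sum.inr y)).ncard := by
        rw [h1, Set.ncard_insert_of_notMem h2, Set.ncard_diff_singleton_add_one hvmem]
      simp [dE, hnum]
    · have h1 : τ'.neighborSet (Sum.inr y) = insert (Sum.inl c) (τ.neighborSet (Sum.inr y)) := by
        rw [hτ'def, nbhd_sup_edge_right (by simp),
          nbhd_del_of_ne (by simp [Ne, Sum.inr.injEq]; exact fun h => hyx h) (by simp)]
      have h2 : (Sum.inl c : V ⊕ E) ∉ τ.neighborSet (Sum.inr y) := fun h => hcz h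
      have hnum : (τ'.neighborSet (Sum.inr y)).ncard = (τ.neighborSet (Sum.inr y)).ncard + 1 := by
        rw [h1, Set.ncard_insert_of_notMem h2]
      simp [dE, hnum, hyx]
  · by_cases hyx : y = x
    · subst hyx
      have h1 : τ'.neighborSet (Sum.inr y) = τ.neighborSet (Sum.inr y) \ {Sum.inl v} := by
        rw [hτ'def, nbhd_sup_edge_of_ne (by simp) (by simp [Ne, Sum.inr.injEq]; exact fun h => hyz h),
          nbhd_del_left hxv]
      have hnum : (τ'.neighborSet (Sum.inr y)).ncard + 1 = (τ.neighborSet (Sum.inr y)).ncard := by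
        rw [h1, Set.ncard_diff_singleton_add_one hvmem]
      simp [dE, hyz]
      omega
    · have h1 : τ'.neighborSet (Sum.inr y) = τ.neighborSet (Sum.inr y) := by
        rw [hτ'def, nbhd_sup_edge_of_ne (by simp) (by simp [Ne, Sum.inr.injEq]; exact fun h => hyz h),
          nbhd_del_of_ne (by simp [Ne, Sum.inr.injEq]; exact fun h => hyx h) (by simp)]
      simp only [dE, if_neg hyx, if_neg hyz, h1]

end AuxBip

section AuxExchange

open SimpleGraph Sum

variable {V E : Type*} {r : V → E → Prop} [Fintype V] [Fintype E] [DecidableEq E]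

/-- The exchange property for spanning trees of a bipartite graph: degrees on the `E` side. -/
private lemma exchange : ∀ (k : ℕ) (τ σ : SimpleGraph (V ⊕ E)),
    IsSpanningTree (BipGraph r) τ → IsSpanningTree (BipGraph r) σ →
    (τ.edgeSet \ σ.edgeSet).ncard ≤ k →
    ∀ x : E, dE σ x < dE τ x →
    ∃ z : E, dE τ z < dE σ z ∧ ∃ π : SimpleGraph (V ⊕ E), IsSpanningTree (BipGraph r) π ∧
      ∀ y : E, dE π y + (if y = x then 1 else 0) = dE τ y + (if y = z then 1 else 0) := by
  intro k
  induction k with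
  | zero =>
    intro τ σ hτ hσ hk x hx
    obtain ⟨v, hv1, hv2⟩ := exists_diff_edge hτ.1 hx
    have hmem : s(Sum.inr x, Sum.inl v) ∈ τ.edgeSet \ σ.edgeSet := ⟨hv1, hv2⟩
    have hpos : 0 < (τ.edgeSet \ σ.edgeSet).ncard :=
      (Set.ncard_pos (Set.toFinite _)).mpr ⟨_, hmem⟩
    omega
  | succ k ih =>
    intro τ σ hτ hσ hk x hx
    obtain ⟨v, hv1, hv2⟩ := exists_diff_edge hτ.1 hx
    set H := τ.deleteEdges {s(Sum.inr x, Sum.inl v)} with hHdef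
    set S : V ⊕ E → Prop := fun u => H.Reachable u (Sum.inr x) with hSdef
    have hSx : S (Sum.inr x) := SimpleGraph.Reachable.refl _
    have hSv : ¬ S (Sum.inl v) := by
      intro hr
      have hP : (SimpleGraph.Walk.cons hv1 SimpleGraph.Walk.nil :
          τ.Walk (Sum.inr x) (Sum.inl v)).IsPath := by simp
      exact not_reach_del_of_mem_path hτ.2.2 hP (by simp) hr.symm
    obtain ⟨P⟩ := hσ.2.1.preconnected (Sum.inl v) (Sum.inr x)
    obtain ⟨a, b, hab, hna, hb⟩ := exists_flip S P hSv hSx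
    have hησ : s(a, b) ∈ σ.edgeSet := P.edges_subset_edgeSet hab
    have hη_ne : s(a, b) ≠ s(Sum.inr x, Sum.inl v) := by
      intro h
      rw [h] at hησ
      exact hv2 (σ.mem_edgeSet.mp hησ)
    have hητ : ¬ τ.Adj a b := by
      intro hadj
      have hH : H.Adj a b := by
        rw [hHdef, SimpleGraph.deleteEdges_adj]
        exact ⟨hadj, by simpa using hη_ne⟩
      exact hna (hH.reachable.trans hb)
    have hnrab : ¬ H.Reachable a b := fun h => hna (h.trans hb)
    have hBab : (BipGraph r).Adj a b := hσ.1 (σ.mem_edgeSet.mp hησ)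
    -- the uniform continuation, given the `E`-endpoint `z` and `V`-endpoint `c` of the new edge
    have main : ∀ (c : V) (z : E), s(Sum.inl c, Sum.inr z) ∈ σ.edgeSet →
        ¬ τ.Adj (Sum.inl c) (Sum.inr z) →
        ¬ H.Reachable (Sum.inl c) (Sum.inr z) →
        ∃ z' : E, dE τ z' < dE σ z' ∧ ∃ π : SimpleGraph (V ⊕ E),
          IsSpanningTree (BipGraph r) π ∧
          ∀ y : E, dE π y + (if y = x then 1 else 0) = dE τ y + (if y = z' then 1 else 0) := by
      intro c z hσδ hητ' hnr'
      obtain ⟨τ', hst', hES', hd⟩ := exchange_step hτ hv1 (hσ.1 (σ.mem_edgeSet.mp hσδ))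
        hητ' hnr'
      have hm : τ'.edgeSet \ σ.edgeSet =
          (τ.edgeSet \ σ.edgeSet) \ {s(Sum.inr x, Sum.inl v)} := by
        rw [hES']
        ext e
        simp only [Set.mem_diff, Set.mem_union, Set.mem_singleton_iff]
        constructor
        · rintro ⟨⟨h1, h2⟩ | h1, h3⟩
          · exact ⟨⟨h1, h3⟩, h2⟩
          · exact absurd (h1 ▸ hσδ) h3
        · rintro ⟨⟨h1, h2⟩, h3⟩
          exact ⟨Or.inl ⟨h1, h3⟩, h2⟩
      have hmeas : (τ'.edgeSet \ σ.edgeSet).ncard ≤ k := by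
        rw [hm, Set.ncard_diff_singleton_of_mem (show s(Sum.inr x, Sum.inl v) ∈ τ.edgeSet \ σ.edgeSet from ⟨hv1, hv2⟩)]
        omega
      by_cases hterm : dE τ z < dE σ z
      · exact ⟨z, hterm, τ', hst', hd⟩
      · push_neg at hterm
        have hrec : dE σ z < dE τ' z := by
          have h1 := hd z
          by_cases hzx : z = x
          · subst hzx; simp at h1; omega
          · simp [hzx] at h1; omega
        obtain ⟨z₂, hz₂, π, hπ, hdeg⟩ := ih τ' σ hst' hσ hmeas z hrec
        have hz₂x : z₂ ≠ x := by
          intro h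
          subst h
          have h1 := hd z₂
          by_cases hzx : z = z₂
          · subst hzx; simp at h1; omega
          · simp [show ¬ z₂ = z from fun hh => hzx hh.symm] at h1; omega
        have hz₂z : z₂ ≠ z := by
          intro h
          subst h
          have h1 := hd z₂
          by_cases hzx : z₂ = x
          · subst hzx; simp at h1; omega
          · simp [hzx] at h1; omega
        refine ⟨z₂, ?_, π, hπ, ?_⟩
        · have h1 := hd z₂
          simp [hz₂x, hz₂z] at h1
          omega
        · intro y
          have h1 := hd y
          have h2 := hdeg y
          by_cases e1 : y = x <;> by_cases e2 : y = z <;> by_cases e3 : y = z₂ <;>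
            simp [e1, e2, e3] at h1 h2 ⊢ <;> omega
    rcases hBab with ⟨c, z, ha, hb', hr'⟩ | ⟨c, z, ha, hb', hr'⟩
    · subst ha; subst hb'
      exact main c z hησ hητ hnrab
    · subst ha; subst hb'
      exact main c z (by rwa [Sym2.eq_swap]) (fun h => hητ h.symm) (fun h => hnrab h.symm)

end AuxExchange

section AuxCount

open SimpleGraph Sum Finset

variable {V E : Type*} {r : V → E → Prop} [Fintype V] [Fintype E]

private lemma hypertree_sum {f : E → ℕ} (hf : IsHypertree r f)
    (hbal : Fintype.card V = Fintype.card E) :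
    (∑ e : E, f e) + 1 = Fintype.card E ∧ 1 ≤ Fintype.card E := by
  classical
  obtain ⟨τ, hτ, hdeg⟩ := hf
  letI : DecidableEq (V ⊕ E) := Classical.decEq _
  letI : DecidableRel τ.Adj := Classical.decRel _
  have htree : τ.IsTree := ⟨hτ.2.1, hτ.2.2⟩
  have hcount : τ.edgeFinset.card + 1 = Fintype.card (V ⊕ E) := htree.card_edgeFinset
  rw [Fintype.card_sum, hbal] at hcount
  have hsum : ∑ u : V ⊕ E, τ.degree u = 2 * τ.edgeFinset.card :=
    SimpleGraph.sum_degrees_eq_twice_card_edges τ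
  have hsplit : ∑ u : V ⊕ E, τ.degree u =
      ∑ v : V, τ.degree (Sum.inl v) + ∑ e : E, τ.degree (Sum.inr e) :=
    Fintype.sum_sum_type _
  have hnoll : ∀ v v' : V, ¬ τ.Adj (Sum.inl v) (Sum.inl v') := by
    intro v v' h
    obtain ⟨e, he, -⟩ := bip_adj_inl (hτ.1 h)
    simp at he
  have hnorr : ∀ e e' : E, ¬ τ.Adj (Sum.inr e) (Sum.inr e') := by
    intro e e' h
    obtain ⟨v, hv, -⟩ := bip_adj_inr (hτ.1 h)
    simp at hv
  have hdeg_split : ∀ u : V ⊕ E,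
      τ.degree u = ∑ w : V ⊕ E, (if τ.Adj u w then 1 else 0) := by
    intro u
    rw [← SimpleGraph.card_neighborFinset_eq_degree, neighborFinset_eq_filter,
      Finset.card_filter]
  have hl : ∀ v : V, τ.degree (Sum.inl v) =
      ∑ e : E, (if τ.Adj (Sum.inl v) (Sum.inr e) then 1 else 0) := by
    intro v
    rw [hdeg_split, Fintype.sum_sum_type]
    simp [hnoll v]
  have hr' : ∀ e : E, τ.degree (Sum.inr e) =
      ∑ v : V, (if τ.Adj (Sum.inl v) (Sum.inr e) then 1 else 0) := by
    intro e
    rw [hdeg_split, Fintype.sum_sum_type]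
    have : ∀ v : V, τ.Adj (Sum.inr e) (Sum.inl v) ↔ τ.Adj (Sum.inl v) (Sum.inr e) :=
      fun v => ⟨fun h => h.symm, fun h => h.symm⟩
    simp [hnorr e, this]
  have hVE : ∑ v : V, τ.degree (Sum.inl v) = ∑ e : E, τ.degree (Sum.inr e) := by
    calc ∑ v : V, τ.degree (Sum.inl v)
        = ∑ v : V, ∑ e : E, (if τ.Adj (Sum.inl v) (Sum.inr e) then 1 else 0) := by
          exact Finset.sum_congr rfl fun v _ => hl v
      _ = ∑ e : E, ∑ v : V, (if τ.Adj (Sum.inl v) (Sum.inr e) then 1 else 0) :=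
          Finset.sum_comm
      _ = ∑ e : E, τ.degree (Sum.inr e) := Finset.sum_congr rfl fun e _ => (hr' e).symm
  have hdegncard : ∀ e : E, τ.degree (Sum.inr e) = f e + 1 := by
    intro e
    rw [← hdeg e, ← Nat.card_coe_set_eq, Nat.card_eq_fintype_card,
      SimpleGraph.card_neighborSet_eq_degree]
  have hEdeg : ∑ e : E, τ.degree (Sum.inr e) = (∑ e : E, f e) + Fintype.card E := by
    rw [Finset.sum_congr rfl fun e _ => hdegncard e, Finset.sum_add_distrib]
    simp [Finset.card_univ]
  rw [hsplit, hVE, hEdeg] at hsum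
  omega

private lemma sum_transfer_of_zero {f : E → ℕ} {e e' : E} (hne : e' ≠ e) (hfe : f e = 0) :
    ∑ x : E, Transfer f e e' x = (∑ x : E, f x) + 1 := by
  classical
  have hT : Transfer f e e' = Function.update f e' (f e' + 1) := by
    funext x
    rw [Transfer]
    by_cases h1 : x = e
    · subst h1
      rw [if_pos rfl, Function.update_of_ne (fun h => hne h.symm), hfe]
    · rw [if_neg h1]
      by_cases h2 : x = e'
      · subst h2; rw [if_pos rfl, Function.update_self]
      · rw [if_neg h2, Function.update_of_ne h2]
  rw [hT, Finset.sum_update_of_mem (Finset.mem_univ e'), Finset.sdiff_singleton_eq_erase]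
  have h2 := Finset.add_sum_erase Finset.univ f (Finset.mem_univ e')
  omega

end AuxCount

section AuxMain

open SimpleGraph Sum Finset

variable {V E : Type*} {r : V → E → Prop} [Fintype V] [Fintype E] [LinearOrder E]
  [DecidableEq E]

private lemma P_of_card [Nonempty E] {P : E → Prop}
    (hc : Nat.card {e : E // P e} = Fintype.card E - 1)
    (hm : ¬ P ((Finset.univ : Finset E).min' Finset.univ_nonempty)) :
    ∀ e : E, e ≠ (Finset.univ : Finset E).min' Finset.univ_nonempty → P e := by
  classical
  set m₀ := (Finset.univ : Finset E).min' Finset.univ_nonempty with hm₀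
  rw [Nat.card_eq_fintype_card, Fintype.card_subtype] at hc
  have hsub : Finset.univ.filter P ⊆ Finset.univ.erase m₀ := by
    intro e he
    rw [Finset.mem_filter] at he
    rw [Finset.mem_erase]
    exact ⟨fun h => hm (h ▸ he.2), Finset.mem_univ _⟩
  have hcard : (Finset.univ.erase m₀).card ≤ (Finset.univ.filter P).card := by
    rw [Finset.card_erase_of_mem (Finset.mem_univ _), Finset.card_univ, hc]
  have heq := Finset.eq_of_subset_of_card_le hsub hcard
  intro e he
  have : e ∈ Finset.univ.filter P := by
    rw [heq, Finset.mem_erase]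
    exact ⟨he, Finset.mem_univ _⟩
  exact (Finset.mem_filter.mp this).2

private lemma not_lt_min [Nonempty E] (e' : E) :
    ¬ e' < (Finset.univ : Finset E).min' Finset.univ_nonempty :=
  not_lt_of_ge (Finset.min'_le _ _ (Finset.mem_univ _))

/-- Any hypertree with maximal internal inactivity is `fmin`. -/
private lemma eq_fmin [Nonempty E] (hbal : Fintype.card V = Fintype.card E) {f : E → ℕ}
    (hf : IsHypertree r f) (hin : intInact r f = Fintype.card E - 1) :
    f = fun e' => if e' = (Finset.univ : Finset E).min' Finset.univ_nonempty then 0 else 1 := by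
  classical
  set m₀ := Finset.univ.min' (Finset.univ_nonempty (α := E)) with hm₀
  obtain ⟨hsum, hn1⟩ := hypertree_sum hf hbal
  have hPm : ¬ ∃ e' < m₀, IsHypertree r (Transfer f m₀ e') := by
    rintro ⟨e', he', -⟩
    exact not_lt_min e' he'
  have hall : ∀ e : E, e ≠ m₀ → ∃ e' < e, IsHypertree r (Transfer f e e') :=
    P_of_card hin hPm
  have hge1 : ∀ e : E, e ≠ m₀ → 1 ≤ f e := by
    intro e he
    by_contra h0
    push_neg at h0
    obtain ⟨e', he', hT⟩ := hall e he
    obtain ⟨hsum', -⟩ := hypertree_sum hT hbal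
    rw [sum_transfer_of_zero (ne_of_lt he') (by omega)] at hsum'
    omega
  have hsplit := Finset.add_sum_erase Finset.univ f (Finset.mem_univ m₀)
  have hbound : (Finset.univ.erase m₀).card ≤ ∑ x ∈ Finset.univ.erase m₀, f x := by
    have := Finset.card_nsmul_le_sum (Finset.univ.erase m₀) f 1
      (fun i hi => hge1 i (Finset.mem_erase.mp hi).1)
    simpa using this
  rw [Finset.card_erase_of_mem (Finset.mem_univ _), Finset.card_univ] at hbound
  have hfm0 : f m₀ = 0 := by omega
  funext e
  by_cases he : e = m₀
  · subst he; simp [hfm0]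
  · rw [if_neg he]
    by_contra hfe
    have h2 : 1 < f e := by
      have := hge1 e he
      omega
    have hlt : ∑ _x ∈ Finset.univ.erase m₀, 1 < ∑ x ∈ Finset.univ.erase m₀, f x :=
      Finset.sum_lt_sum (fun i hi => hge1 i (Finset.mem_erase.mp hi).1)
        ⟨e, Finset.mem_erase.mpr ⟨he, Finset.mem_univ _⟩, h2⟩
    rw [Finset.sum_const, Finset.card_erase_of_mem (Finset.mem_univ _), Finset.card_univ] at hlt
    simp only [smul_eq_mul, mul_one] at hlt
    omega

private lemma transfer_fmin_eq {e : E} [Nonempty E]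
    (he : e ≠ (Finset.univ : Finset E).min' Finset.univ_nonempty) :
    Transfer (fun e' => if e' = (Finset.univ : Finset E).min' Finset.univ_nonempty then 0 else 1) e
        ((Finset.univ : Finset E).min' Finset.univ_nonempty) =
      fun e' => if e' = e then 0 else 1 := by
  classical
  set m₀ := Finset.univ.min' (Finset.univ_nonempty (α := E)) with hm₀
  funext x
  rw [Transfer]
  by_cases h1 : x = e
  · subst h1
    rw [if_pos rfl, if_pos rfl, if_neg he]
  · rw [if_neg h1, if_neg h1]
    by_cases h2 : x = m₀
    · subst h2
      rw [if_pos rfl, if_pos rfl]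
    · rw [if_neg h2, if_neg h2]

/-- If all the `f_e` are hypertrees then the internal inactivity of `fmin` is `n - 1`. -/
private lemma intInact_fmin [Nonempty E]
    (hall : ∀ e : E, IsHypertree r (fun e' => if e' = e then 0 else 1)) :
    intInact r (fun e' => if e' = (Finset.univ : Finset E).min' Finset.univ_nonempty then 0 else 1) =
      Fintype.card E - 1 := by
  classical
  set m₀ := Finset.univ.min' (Finset.univ_nonempty (α := E)) with hm₀
  set fmin : E → ℕ := fun e' => if e' = m₀ then 0 else 1 with hfmin
  have hiff : ∀ e : E, (∃ e' < e, IsHypertree r (Transfer fmin e e')) ↔ e ≠ m₀ := by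
    intro e
    constructor
    · rintro ⟨e', he', -⟩ rfl
      exact not_lt_min e' he'
    · intro he
      refine ⟨m₀, lt_of_le_of_ne (Finset.min'_le _ _ (Finset.mem_univ _)) (Ne.symm he), ?_⟩
      rw [hfmin, transfer_fmin_eq he]
      exact hall e
  rw [intInact]
  rw [Nat.card_congr (Equiv.subtypeEquivRight hiff)]
  rw [Nat.card_eq_fintype_card]
  rw [Fintype.card_subtype_compl, Fintype.card_subtype_eq]

private lemma coeff_interiorPoly (r : V → E → Prop) (i : ℕ) (hi : i < Fintype.card E + 1) :
    (interiorPoly r).coeff i =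
      ((Nat.card {f : E → ℕ // IsHypertree r f ∧ intInact r f = i} : ℕ) : ℤ) := by
  rw [interiorPoly, Polynomial.finset_sum_coeff]
  simp only [Polynomial.coeff_C_mul, Polynomial.coeff_X_pow, mul_ite, mul_one, mul_zero]
  rw [Finset.sum_ite_eq (Finset.range (Fintype.card E + 1))
    i (fun j => ((Nat.card {f : E → ℕ // IsHypertree r f ∧ intInact r f = j} : ℕ) : ℤ))]
  rw [if_pos (Finset.mem_range.mpr hi)]

end AuxMain

section AuxHard

open SimpleGraph Sum Finset

variable {V E : Type*} {r : V → E → Prop} [Fintype V] [Fintype E] [LinearOrder E]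
  [DecidableEq E]

/-- The hard direction: if `fmin` is a hypertree of maximal internal inactivity, then every
`f_e` is a hypertree. -/
private lemma hard_direction [Nonempty E]
    (hmin : IsHypertree r (fun e' => if e' = (Finset.univ : Finset E).min' Finset.univ_nonempty
      then 0 else 1))
    (hstep : ∀ e : E, e ≠ (Finset.univ : Finset E).min' Finset.univ_nonempty →
      ∃ e' < e, IsHypertree r (Transfer
        (fun e'' => if e'' = (Finset.univ : Finset E).min' Finset.univ_nonempty then 0 else 1)
        e e')) :
    ∀ e : E, IsHypertree r (fun e' => if e' = e then 0 else 1) := by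
  classical
  set m₀ := (Finset.univ : Finset E).min' Finset.univ_nonempty with hm₀
  intro e
  induction e using WellFoundedLT.induction with
  | ind e ih =>
  by_cases hem : e = m₀
  · subst hem
    exact hmin
  · obtain ⟨e', he', hg⟩ := hstep e hem
    by_cases he'm : e' = m₀
    · subst he'm
      have htr := transfer_fmin_eq (E := E) hem
      rw [← hm₀] at htr
      rwa [htr] at hg
    · have hh := ih e' he'
      obtain ⟨τ, hτ, hdτ⟩ := hh
      obtain ⟨σ, hσ, hdσ⟩ := hg
      have he'e : e' ≠ e := ne_of_lt he'
      have hdτ' : ∀ y : E, dE τ y = (if y = e' then 0 else 1) + 1 := fun y => hdτ y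
      have hdσ' : ∀ y : E, dE σ y = Transfer
          (fun e'' => if e'' = m₀ then 0 else 1) e e' y + 1 := fun y => hdσ y
      have hx : dE σ e < dE τ e := by
        have h1 := hdσ' e
        have h2 := hdτ' e
        simp [Transfer, hem, Ne.symm he'e] at h1 h2
        omega
      obtain ⟨z, hz, π, hπ, hd⟩ := exchange (τ.edgeSet \ σ.edgeSet).ncard τ σ hτ hσ le_rfl e hx
      have hze' : z = e' := by
        by_contra hzz
        have h1 := hdτ' z
        have h2 := hdσ' z
        by_cases hze : z = e
        · subst hze
          simp [Transfer, hzz, hem] at h1 h2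
          omega
        · by_cases hzm : z = m₀
          · subst hzm
            simp [Transfer, hzz, hze] at h1 h2
            omega
          · simp [Transfer, hzz, hze, hzm] at h1 h2
            omega
      rw [hze'] at hd
      refine ⟨π, hπ, fun y => ?_⟩
      show dE π y = (if y = e then 0 else 1) + 1
      have h1 := hd y
      have h2 := hdτ' y
      have hne2 : e ≠ e' := Ne.symm he'e
      by_cases hy1 : y = e
      · subst hy1
        simp [hne2, he'e] at h1 h2 ⊢
        omega
      · by_cases hy2 : y = e'
        · subst hy2
          simp [hy1, he'e, hne2] at h1 h2 ⊢
          omega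
        · simp [hy1, hy2] at h1 h2 ⊢
          omega

end AuxHard

/-- for a connected balanced bipartite graph with `|V| = |E| = n`, the
coefficient of `x^(n-1)` in `I_G` is nonzero iff every function `f_i` (with `f_i(e_i) = 0`
and `f_i(e_j) = 1` for `j ≠ i`) is a hypertree; moreover this coefficient is at most `1`. -/
theorem interiorPoly_top_coeff_balanced {V E : Type*} [Fintype V] [Fintype E] [LinearOrder E]
    [DecidableEq E] (r : V → E → Prop) (hconn : (BipGraph r).Connected)
    (hbal : Fintype.card V = Fintype.card E) :
    ((interiorPoly r).coeff (Fintype.card E - 1) ≠ 0 ↔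
        ∀ e : E, IsHypertree r (fun e' => if e' = e then 0 else 1)) ∧
      (interiorPoly r).coeff (Fintype.card E - 1) ≤ 1 := by
  classical
  haveI hne : Nonempty E := by
    by_contra h
    rw [not_nonempty_iff] at h
    haveI : IsEmpty V := Fintype.card_eq_zero_iff.mp (by rw [hbal]; exact Fintype.card_eq_zero)
    obtain ⟨u⟩ := hconn.nonempty
    rcases u with v | e
    · exact IsEmpty.false v
    · exact IsEmpty.false e
  have hco := coeff_interiorPoly r (Fintype.card E - 1) (by omega)
  set m₀ := (Finset.univ : Finset E).min' Finset.univ_nonempty with hm₀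
  have huniq : ∀ f : E → ℕ, IsHypertree r f → intInact r f = Fintype.card E - 1 →
      f = fun e' => if e' = m₀ then 0 else 1 := fun f h1 h2 => eq_fmin hbal h1 h2
  haveI hss : Subsingleton
      {f : E → ℕ // IsHypertree r f ∧ intInact r f = Fintype.card E - 1} := by
    constructor
    rintro ⟨f, hf1, hf2⟩ ⟨g, hg1, hg2⟩
    exact Subtype.ext ((huniq f hf1 hf2).trans (huniq g hg1 hg2).symm)
  have hcard_le :
      Nat.card {f : E → ℕ // IsHypertree r f ∧ intInact r f = Fintype.card E - 1} ≤ 1 := by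
    rcases isEmpty_or_nonempty
        {f : E → ℕ // IsHypertree r f ∧ intInact r f = Fintype.card E - 1} with h | h
    · rw [Nat.card_of_isEmpty]
      omega
    · haveI := uniqueOfSubsingleton (Classical.arbitrary
        {f : E → ℕ // IsHypertree r f ∧ intInact r f = Fintype.card E - 1})
      rw [Nat.card_unique]
  refine ⟨⟨?_, ?_⟩, ?_⟩
  · intro hc0
    rw [hco] at hc0
    have hcn : Nat.card {f : E → ℕ // IsHypertree r f ∧ intInact r f = Fintype.card E - 1} ≠ 0 :=
      Int.natCast_ne_zero.mp hc0
    obtain ⟨⟨f, hf1, hf2⟩⟩ := (Nat.card_ne_zero.mp hcn).1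
    have hfeq := huniq f hf1 hf2
    rw [hfeq] at hf1 hf2
    have hPm : ¬ ∃ e' < m₀,
        IsHypertree r (Transfer (fun e'' => if e'' = m₀ then 0 else 1) m₀ e') := by
      rintro ⟨e', he', -⟩
      exact not_lt_min e' he'
    have hstep := P_of_card (P := fun e => ∃ e' < e,
      IsHypertree r (Transfer (fun e'' => if e'' = m₀ then 0 else 1) e e')) hf2 hPm
    exact hard_direction hf1 hstep
  · intro hall
    rw [hco]
    have h1 : IsHypertree r (fun e' => if e' = m₀ then 0 else 1) := hall m₀
    have h2 : intInact r (fun e' => if e' = m₀ then 0 else 1) = Fintype.card E - 1 :=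
      intInact_fmin hall
    haveI hnn : Nonempty {f : E → ℕ // IsHypertree r f ∧ intInact r f = Fintype.card E - 1} :=
      ⟨⟨_, h1, h2⟩⟩
    have hcn : Nat.card {f : E → ℕ // IsHypertree r f ∧ intInact r f = Fintype.card E - 1} ≠ 0 :=
      Nat.card_ne_zero.mpr ⟨hnn, Finite.of_subsingleton⟩
    exact_mod_cast hcn
  · rw [hco]
    exact_mod_cast hcard_le
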